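/- Let m > 1 be an integer and suppose m = a₁b₁ = a₂b₂ with a₁, a₂, b₁, b₂ integers at least 2, b₁ ≥ a₁, b₂ ≥ a₂, and a₁ ≤ a₂. Then (b₁!)^{a₁} · a₁! ≥ (b₂!)^{a₂} · a₂!, with equality if and only if a₁ = a₂ and b₁ = b₂. -/

import Mathlib

lemma aux_pow_gt (b : ℕ) (hb : 2 ≤ b) : b.factorial * (b + 1) < (b + 1) ^ b := by
  induction b with
  | zero => omega
  | succ n ih =>
    rcases Nat.lt_or_ge n 2 with h | h
    · interval_cases n
      · omega
      · decide
    · have ihn := ih h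
      calc (n + 1).factorial * (n + 2) = (n.factorial * (n + 1)) * (n + 2) := by
            rw [Nat.factorial_succ]; ring
        _ < (n + 1) ^ n * (n + 2) := by
            exact Nat.mul_lt_mul_of_lt_of_le ihn le_rfl (by omega)
        _ ≤ (n + 2) ^ n * (n + 2) := by
            exact Nat.mul_le_mul_right _ (Nat.pow_le_pow_left (by omega) n)
        _ = (n + 2) ^ (n + 1) := by ring

lemma aux_fac_le (a k : ℕ) : (a + k).factorial ≤ a.factorial * (a + k) ^ k := by
  induction k with
  | zero => simp
  | succ n ih =>
    calc (a + (n + 1)).factorial = (a + n + 1) * (a + n).factorial := by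
          rw [show a + (n + 1) = a + n + 1 from rfl, Nat.factorial_succ]
      _ ≤ (a + n + 1) * (a.factorial * (a + n) ^ n) := Nat.mul_le_mul_left _ ih
      _ = a.factorial * ((a + n) ^ n * (a + n + 1)) := by ring
      _ ≤ a.factorial * ((a + n + 1) ^ n * (a + n + 1)) := by
          exact Nat.mul_le_mul_left _
            (Nat.mul_le_mul_right _ (Nat.pow_le_pow_left (by omega) n))
      _ = a.factorial * (a + (n + 1)) ^ (n + 1) := by ring

theorem stmt_4 (m a₁ b₁ a₂ b₂ : ℕ) (hm : 1 < m)
    (h₁ : m = a₁ * b₁) (h₂ : m = a₂ * b₂)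
    (ha₁ : 2 ≤ a₁) (ha₂ : 2 ≤ a₂) (hb₁ : 2 ≤ b₁) (hb₂ : 2 ≤ b₂)
    (hba₁ : a₁ ≤ b₁) (hba₂ : a₂ ≤ b₂) (haa : a₁ ≤ a₂) :
    (Nat.factorial b₂) ^ a₂ * Nat.factorial a₂ ≤ (Nat.factorial b₁) ^ a₁ * Nat.factorial a₁ ∧
    ((Nat.factorial b₁) ^ a₁ * Nat.factorial a₁ = (Nat.factorial b₂) ^ a₂ * Nat.factorial a₂ ↔
      a₁ = a₂ ∧ b₁ = b₂) := by
  have hm' : a₁ * b₁ = a₂ * b₂ := by rw [← h₁, ← h₂]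
  rcases eq_or_lt_of_le haa with heq | hlt
  · subst heq
    have hb : b₁ = b₂ := Nat.eq_of_mul_eq_mul_left (by omega) hm'
    subst hb
    simp
  · have hb21 : b₂ < b₁ := by
      by_contra h
      push_neg at h
      have hlt2 : a₁ * b₁ < a₂ * b₂ :=
        calc a₁ * b₁ ≤ a₁ * b₂ := Nat.mul_le_mul_left _ h
          _ < a₂ * b₂ := Nat.mul_lt_mul_of_lt_of_le hlt le_rfl (by omega)
      exact absurd hm' hlt2.ne
    obtain ⟨k, hk⟩ : ∃ k, a₂ = a₁ + k := ⟨a₂ - a₁, by omega⟩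
    have hk1 : 1 ≤ k := by omega
    obtain ⟨d, hd⟩ : ∃ d, b₁ = b₂ + d := ⟨b₁ - b₂, by omega⟩
    have had : a₁ * d = k * b₂ := by
      have h2 : a₁ * b₂ + a₁ * d = a₁ * b₂ + k * b₂ := by
        have h3 := hm'
        rw [hd, hk] at h3
        calc a₁ * b₂ + a₁ * d = a₁ * (b₂ + d) := by ring
          _ = (a₁ + k) * b₂ := h3
          _ = a₁ * b₂ + k * b₂ := by ring
      exact Nat.add_left_cancel h2
    have s1 : b₂.factorial * (b₂ + 1) ^ d ≤ b₁.factorial := by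
      rw [hd]; exact Nat.factorial_mul_pow_le_factorial
    have s2 : b₂.factorial * (b₂ + 1) < (b₂ + 1) ^ b₂ := aux_pow_gt b₂ hb₂
    have s3 : a₂.factorial ≤ a₁.factorial * a₂ ^ k := by
      rw [hk]; exact aux_fac_le a₁ k
    have hexp : b₂ * k = d * a₁ := by rw [mul_comm b₂ k, ← had, mul_comm]
    have key : b₂.factorial ^ a₂ * a₂.factorial < b₁.factorial ^ a₁ * a₁.factorial := by
      calc b₂.factorial ^ a₂ * a₂.factorial
          ≤ b₂.factorial ^ a₂ * (a₁.factorial * a₂ ^ k) := Nat.mul_le_mul_left _ s3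
        _ ≤ b₂.factorial ^ a₂ * (a₁.factorial * (b₂ + 1) ^ k) := by
            exact Nat.mul_le_mul_left _
              (Nat.mul_le_mul_left _ (Nat.pow_le_pow_left (by omega) k))
        _ = ((b₂.factorial * (b₂ + 1)) ^ k * b₂.factorial ^ a₁) * a₁.factorial := by
            rw [hk, pow_add, mul_pow]; ring
        _ < (((b₂ + 1) ^ b₂) ^ k * b₂.factorial ^ a₁) * a₁.factorial := by
            have hp : (b₂.factorial * (b₂ + 1)) ^ k < ((b₂ + 1) ^ b₂) ^ k :=
              Nat.pow_lt_pow_left s2 (by omega)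
            have hq : 0 < b₂.factorial ^ a₁ * a₁.factorial :=
              Nat.mul_pos (Nat.pow_pos b₂.factorial_pos) a₁.factorial_pos
            calc (b₂.factorial * (b₂ + 1)) ^ k * b₂.factorial ^ a₁ * a₁.factorial
                = (b₂.factorial * (b₂ + 1)) ^ k * (b₂.factorial ^ a₁ * a₁.factorial) := by ring
              _ < ((b₂ + 1) ^ b₂) ^ k * (b₂.factorial ^ a₁ * a₁.factorial) :=
                  Nat.mul_lt_mul_of_lt_of_le hp le_rfl hq
              _ = ((b₂ + 1) ^ b₂) ^ k * b₂.factorial ^ a₁ * a₁.factorial := by ring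
        _ = (b₂.factorial * (b₂ + 1) ^ d) ^ a₁ * a₁.factorial := by
            rw [mul_pow, ← pow_mul, ← pow_mul, hexp, mul_comm (((b₂+1):ℕ) ^ (d * a₁))]
        _ ≤ b₁.factorial ^ a₁ * a₁.factorial :=
            Nat.mul_le_mul_right _ (Nat.pow_le_pow_left s1 a₁)
    refine ⟨key.le, ?_, ?_⟩
    · intro h
      exact absurd h key.ne'
    · rintro ⟨rfl, rfl⟩
      omega
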